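/- For u ∈ L^p(ℝ^N), 1 ≤ p < ∞, the weak-L^p quasi-norm of F(x,y) := (u(x)-u(y))/|x-y|^{N/p} on ℝ^N × ℝ^N satisfies [F]_{L^{p,∞}} ≤ 2 (2κ_N)^{1/p} ‖u‖_{L^p(ℝ^N)}, where [F]_{L^{p,∞}} = sup_{λ>0} (λ^p · |{(x,y) : |F(x,y)| ≥ λ}|)^{1/p}. -/
import Mathlib

open MeasureTheory Metric Set Filter

theorem stmt2 (N : ℕ) (hN : 1 ≤ N) (p : ℝ) (hp : 1 ≤ p)
    (u : EuclideanSpace ℝ (Fin N) → ℝ) (hu : Measurable u)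
    (hint : Integrable (fun x => |u x| ^ p)) :
    (⨆ lam ∈ Set.Ioi (0 : ℝ),
        (ENNReal.ofReal (lam ^ p) *
          volume {q : EuclideanSpace ℝ (Fin N) × EuclideanSpace ℝ (Fin N) |
            q.1 ≠ q.2 ∧ lam * dist q.1 q.2 ^ ((N : ℝ) / p) ≤ |u q.1 - u q.2|}) ^ (1 / p))
      ≤ ENNReal.ofReal (2 *
          (2 * (volume (ball (0 : EuclideanSpace ℝ (Fin N)) 1)).toReal) ^ (1 / p) *
          (∫ x, |u x| ^ p) ^ (1 / p)) := by
  have hp0 : 0 < p := lt_of_lt_of_le one_pos hp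
  have hN0 : (0:ℝ) < N := by exact_mod_cast hN
  set κ := volume (ball (0 : EuclideanSpace ℝ (Fin N)) 1) with hκdef
  have hκ_ne : κ ≠ ⊤ := measure_ball_lt_top.ne
  set I := ∫ x, |u x| ^ p with hIdef
  have hI0 : 0 ≤ I := integral_nonneg fun x => Real.rpow_nonneg (abs_nonneg _) _
  have hlint : (∫⁻ x, ENNReal.ofReal (|u x| ^ p)) = ENNReal.ofReal I :=
    (ofReal_integral_eq_lintegral_ofReal hint
      (Eventually.of_forall fun x => Real.rpow_nonneg (abs_nonneg _) _)).symm
  refine iSup₂_le fun lam hlam => ?_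
  have hlam0 : (0:ℝ) < lam := hlam
  set A : Set (EuclideanSpace ℝ (Fin N) × EuclideanSpace ℝ (Fin N)) := {q | lam * dist q.1 q.2 ^ ((N:ℝ)/p) ≤ 2 * |u q.1|} with hAdef
  set B : Set (EuclideanSpace ℝ (Fin N) × EuclideanSpace ℝ (Fin N)) := {q | lam * dist q.1 q.2 ^ ((N:ℝ)/p) ≤ 2 * |u q.2|} with hBdef
  -- inclusion
  have hsub : {q : EuclideanSpace ℝ (Fin N) × EuclideanSpace ℝ (Fin N) | q.1 ≠ q.2 ∧ lam * dist q.1 q.2 ^ ((N:ℝ)/p) ≤ |u q.1 - u q.2|}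
      ⊆ A ∪ B := by
    rintro ⟨x, y⟩ ⟨-, h⟩
    have h2 : |u x - u y| ≤ |u x| + |u y| := abs_sub _ _
    rcases le_total (|u y|) (|u x|) with hc | hc
    · left; simp only [hAdef, mem_setOf_eq]; nlinarith
    · right; simp only [hBdef, mem_setOf_eq]; nlinarith
  -- measurability
  have hdistm : Measurable fun q : EuclideanSpace ℝ (Fin N) × EuclideanSpace ℝ (Fin N) => lam * dist q.1 q.2 ^ ((N:ℝ)/p) :=
    (((Real.continuous_rpow_const (by positivity)).measurable.comp'
      (measurable_fst.dist measurable_snd))).const_mul lam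
  have hAmeas : MeasurableSet A :=
    measurableSet_le hdistm ((hu.comp' measurable_fst).abs.const_mul 2)
  -- volume of A
  have key : ∀ d c : ℝ, 0 ≤ d → 0 ≤ c →
      (lam * d ^ ((N:ℝ)/p) ≤ c ↔ d ≤ (c / lam) ^ (p/(N:ℝ))) := by
    intro d c hd hc
    rw [mul_comm, ← le_div_iff₀ hlam0,
      show p/(N:ℝ) = ((N:ℝ)/p)⁻¹ by rw [inv_div]]
    exact (Real.le_rpow_inv_iff_of_pos hd (div_nonneg hc hlam0.le) (by positivity)).symm
  have hslice : ∀ x : EuclideanSpace ℝ (Fin N), Prod.mk x ⁻¹' A =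
      closedBall x ((2 * |u x| / lam) ^ (p/(N:ℝ))) := by
    intro x
    ext y
    simp only [hAdef, mem_preimage, mem_setOf_eq, mem_closedBall, dist_comm y x]
    exact key (dist x y) (2 * |u x|) dist_nonneg (by positivity)
  have hsvol : ∀ x : EuclideanSpace ℝ (Fin N), volume (Prod.mk x ⁻¹' A)
      = ENNReal.ofReal ((2/lam) ^ p * |u x| ^ p) * κ := by
    intro x
    rw [hslice x, Measure.addHaar_closedBall _ _ (by positivity)]
    congr 2
    rw [finrank_euclideanSpace_fin, ← Real.rpow_natCast ((2 * |u x| / lam) ^ (p/(N:ℝ))) N,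
      ← Real.rpow_mul (by positivity), div_mul_cancel₀ _ hN0.ne',
      Real.div_rpow (by positivity) hlam0.le, Real.mul_rpow (by norm_num) (abs_nonneg _),
      Real.div_rpow (by norm_num) hlam0.le]
    ring
  have hvolA : volume A = ENNReal.ofReal ((2/lam) ^ p) * ENNReal.ofReal I * κ := by
    rw [Measure.volume_eq_prod _ _, Measure.prod_apply hAmeas]
    simp only [hsvol]
    rw [lintegral_mul_const _ (by
        exact (measurable_const.mul ((Real.continuous_rpow_const hp0.le).measurable.comp' hu.abs)).ennreal_ofReal)]
    congr 1
    simp_rw [ENNReal.ofReal_mul (le_of_lt (by positivity : (0:ℝ) < (2/lam)^p))]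
    rw [lintegral_const_mul _ (((Real.continuous_rpow_const hp0.le).measurable.comp' hu.abs).ennreal_ofReal), hlint]
  -- volume of B = volume of A
  have hvolB : volume B = volume A := by
    have hswap : B = Prod.swap ⁻¹' A := by
      ext ⟨x, y⟩
      simp [hAdef, hBdef, dist_comm]
    rw [hswap, Measure.volume_eq_prod _ _,
      Measure.measurePreserving_swap.measure_preimage hAmeas.nullMeasurableSet,
      ← Measure.volume_eq_prod _ _]
  have hvolE : volume {q : EuclideanSpace ℝ (Fin N) × EuclideanSpace ℝ (Fin N) | q.1 ≠ q.2 ∧ lam * dist q.1 q.2 ^ ((N:ℝ)/p) ≤ |u q.1 - u q.2|}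
      ≤ 2 * volume A := by
    calc _ ≤ volume (A ∪ B) := measure_mono hsub
    _ ≤ volume A + volume B := measure_union_le _ _
    _ = 2 * volume A := by rw [hvolB, two_mul]
  -- main estimate
  have hmul : ENNReal.ofReal (lam ^ p) *
      volume {q : EuclideanSpace ℝ (Fin N) × EuclideanSpace ℝ (Fin N) | q.1 ≠ q.2 ∧ lam * dist q.1 q.2 ^ ((N:ℝ)/p) ≤ |u q.1 - u q.2|}
      ≤ 2 * ENNReal.ofReal (2 ^ p) * ENNReal.ofReal I * κ := by
    calc ENNReal.ofReal (lam ^ p) * _ ≤ ENNReal.ofReal (lam ^ p) * (2 * volume A) :=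
        mul_le_mul_right hvolE _
    _ = 2 * (ENNReal.ofReal (lam ^ p) * ENNReal.ofReal ((2/lam) ^ p)) *
        ENNReal.ofReal I * κ := by rw [hvolA]; ring
    _ = 2 * ENNReal.ofReal (2 ^ p) * ENNReal.ofReal I * κ := by
        rw [← ENNReal.ofReal_mul (by positivity),
          ← Real.mul_rpow hlam0.le (by positivity),
          show lam * (2 / lam) = 2 by field_simp]
  calc (ENNReal.ofReal (lam ^ p) * _) ^ (1/p)
      ≤ (2 * ENNReal.ofReal (2 ^ p) * ENNReal.ofReal I * κ) ^ (1/p) :=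
        ENNReal.rpow_le_rpow hmul (by positivity)
  _ = ENNReal.ofReal (2 * (2 * κ.toReal) ^ (1/p) * I ^ (1/p)) := by
      have h2 : (2:ENNReal) = ENNReal.ofReal 2 := by simp
      rw [ENNReal.ofReal_mul (mul_nonneg (by norm_num) (Real.rpow_nonneg (by positivity) _)),
        ENNReal.ofReal_mul (by norm_num : (0:ℝ) ≤ 2),
        ← ENNReal.ofReal_rpow_of_nonneg hI0 (by positivity),
        ← ENNReal.ofReal_rpow_of_nonneg (by positivity : (0:ℝ) ≤ 2 * κ.toReal) (by positivity),
        ENNReal.ofReal_mul (by norm_num : (0:ℝ) ≤ 2), ENNReal.ofReal_toReal hκ_ne,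
        h2, ← ENNReal.ofReal_rpow_of_pos two_pos]
      rw [show ENNReal.ofReal 2 * ENNReal.ofReal 2 ^ p * ENNReal.ofReal I * κ
          = ENNReal.ofReal 2 ^ p * ((ENNReal.ofReal 2 * κ) * ENNReal.ofReal I) by ring,
        ENNReal.mul_rpow_of_nonneg _ _ (by positivity),
        ENNReal.mul_rpow_of_nonneg _ _ (by positivity),
        ← ENNReal.rpow_mul, mul_one_div_cancel hp0.ne', ENNReal.rpow_one]
      ring
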